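/- If a connected graph G has a perfect matching M and a spanning tree T with M ⊆ E(T), and some edge e ∈ E(G) \ E(T) is such that the unique cycle of T + e is not M-alternating, then af(G, M) ≤ |E(G)| − |V(G)|, i.e., strictly less than the cyclomatic number of G. -/

import Mathlib

open scoped Classical

variable {V : Type*} [Fintype V] [DecidableEq V]

/-- `M` is a perfect matching of `G`: a set of edges of `G` such that every
vertex lies in exactly one edge of `M`. -/
def IsPM (G : SimpleGraph V) (M : Set (Sym2 V)) : Prop :=
  M ⊆ G.edgeSet ∧ ∀ v : V, ∃! e, e ∈ M ∧ v ∈ e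

/-- `M` is the unique perfect matching of `G`. -/
def IsUniquePM (G : SimpleGraph V) (M : Set (Sym2 V)) : Prop :=
  IsPM G M ∧ ∀ M', IsPM G M' → M' = M

/-- A closed walk `c` is an `M`-alternating cycle: it is a cycle of even length
whose edges lie alternately in `M` and outside `M`. -/
def IsAltCycle {G : SimpleGraph V} (M : Set (Sym2 V)) {v : V} (c : G.Walk v v) : Prop :=
  c.IsCycle ∧ Even c.edges.length ∧
    ((∀ i (h : i < c.edges.length), c.edges.get ⟨i, h⟩ ∈ M ↔ Even i) ∨
     (∀ i (h : i < c.edges.length), c.edges.get ⟨i, h⟩ ∈ M ↔ ¬ Even i))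

lemma pm_exists_partner {H : SimpleGraph V} {M : Set (Sym2 V)} (hM : IsPM H M) :
    ∃ m : V → V, (∀ v, s(v, m v) ∈ M) ∧ (∀ v, m v ≠ v) ∧ (∀ v b, s(v, b) ∈ M → b = m v) := by
  choose f hf1 hf2 using fun v => (hM.2 v).exists
  refine ⟨fun v => Sym2.Mem.other' (hf2 v), fun v => ?_, fun v hc => ?_, fun v b hb => ?_⟩
  · rw [Sym2.other_spec']; exact hf1 v
  · have hd : ¬ (f v).IsDiag := (H.not_isDiag_of_mem_edgeSet (hM.1 (hf1 v)))
    apply hd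
    simp only at hc
    rw [← Sym2.other_spec' (hf2 v), hc]
    exact Sym2.mk_isDiag_iff.2 rfl
  · have h1 : s(v, b) = f v := (hM.2 v).unique ⟨hb, Sym2.mem_mk_left v b⟩ ⟨hf1 v, hf2 v⟩
    rw [← Sym2.other_spec' (hf2 v)] at h1
    exact Sym2.congr_right.mp h1

def mkWalk {H : SimpleGraph V} (x : ℕ → V) (hadj : ∀ i, H.Adj (x i) (x (i+1))) :
    (k : ℕ) → H.Walk (x 0) (x k)
  | 0 => SimpleGraph.Walk.nil
  | (k+1) => (mkWalk x hadj k).concat (hadj k)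

lemma mkWalk_edges {H : SimpleGraph V} (x : ℕ → V) (hadj : ∀ i, H.Adj (x i) (x (i+1))) :
    ∀ k, (mkWalk x hadj k).edges = (List.range k).map (fun i => s(x i, x (i+1)))
  | 0 => rfl
  | (k+1) => by
      rw [mkWalk, SimpleGraph.Walk.edges_concat, mkWalk_edges x hadj k, List.range_succ]
      simp

lemma mkWalk_support {H : SimpleGraph V} (x : ℕ → V) (hadj : ∀ i, H.Adj (x i) (x (i+1))) :
    ∀ k, (mkWalk x hadj k).support = (List.range (k+1)).map x
  | 0 => rfl
  | (k+1) => by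
      rw [mkWalk, SimpleGraph.Walk.support_concat, mkWalk_support x hadj k,
        List.range_succ (n := k+1)]
      simp


open SimpleGraph in
lemma two_pm_alt_cycle {H : SimpleGraph V} {M M' : Set (Sym2 V)}
    (hM : IsPM H M) (hM' : IsPM H M') (hne : M' ≠ M) :
    ∃ (v : V) (c : H.Walk v v), IsAltCycle M c := by
  obtain ⟨m, hm1, hm2, hm3⟩ := pm_exists_partner hM
  obtain ⟨m', hm'1, hm'2, hm'3⟩ := pm_exists_partner hM'
  have hmm : ∀ v, m (m v) = v := fun v =>
    (hm3 (m v) v (by rw [Sym2.eq_swap]; exact hm1 v)).symm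
  have hmm' : ∀ v, m' (m' v) = v := fun v =>
    (hm'3 (m' v) v (by rw [Sym2.eq_swap]; exact hm'1 v)).symm
  have hminj : Function.Injective m := Function.LeftInverse.injective hmm
  have hm'inj : Function.Injective m' := Function.LeftInverse.injective hmm'
  have hex : ∃ v0, m v0 ≠ m' v0 := by
    by_contra h
    push_neg at h
    apply hne
    ext ε
    induction ε using Sym2.ind with
    | _ a b =>
      constructor
      · intro hb
        have hb' := hm'3 a b hb
        rw [hb', ← h a]
        exact hm1 a
      · intro hb
        have hb' := hm3 a b hb
        rw [hb', h a]
        exact hm'1 a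
  obtain ⟨v0, hv0⟩ := hex
  let x : ℕ → V := fun n => Nat.rec v0 (fun k xk => if Even k then m xk else m' xk) n
  have hx0 : x 0 = v0 := rfl
  have hxs : ∀ k, x (k+1) = if Even k then m (x k) else m' (x k) := fun k => rfl
  have hxse : ∀ k, Even k → x (k+1) = m (x k) := fun k hk => by rw [hxs, if_pos hk]
  have hxso : ∀ k, ¬ Even k → x (k+1) = m' (x k) := fun k hk => by rw [hxs, if_neg hk]
  have inv : ∀ k, (s(x k, x (k+1)) ∈ M ↔ Even k) ∧ (s(x k, x (k+1)) ∈ M' ↔ ¬ Even k) := by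
    intro k
    induction k with
    | zero =>
      have h1 : x (0+1) = m v0 := hxse 0 Even.zero
      constructor
      · rw [hx0, h1]
        simp only [Even.zero, iff_true]
        exact hm1 v0
      · rw [hx0, h1]
        simp only [Even.zero, not_true_eq_false, iff_false]
        intro hc
        exact hv0 (hm'3 v0 (m v0) hc)
    | succ k ih =>
      by_cases hk : Even k
      · have hk1 : ¬ Even (k+1) := by simp [Nat.even_add_one, hk]
        have e2 : x (k+2) = m' (x (k+1)) := hxso (k+1) hk1
        have hM'mem : s(x (k+1), x (k+2)) ∈ M' := by rw [e2]; exact hm'1 (x (k+1))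
        have hMnot : s(x (k+1), x (k+2)) ∉ M := by
          intro hc
          have h4 : x (k+2) = m (x (k+1)) := hm3 _ _ hc
          have h5 : m (x (k+1)) = x k := by rw [hxse k hk, hmm]
          have h6 : s(x (k+1), x (k+2)) = s(x k, x (k+1)) := by
            rw [h4, h5, Sym2.eq_swap]
          exact (ih.2.mp (h6 ▸ hM'mem)) hk
        exact ⟨iff_of_false hMnot hk1, iff_of_true hM'mem hk1⟩
      · have hk1 : Even (k+1) := Nat.even_add_one.mpr hk
        have e2 : x (k+2) = m (x (k+1)) := hxse (k+1) hk1
        have hMmem : s(x (k+1), x (k+2)) ∈ M := by rw [e2]; exact hm1 (x (k+1))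
        have hM'not : s(x (k+1), x (k+2)) ∉ M' := by
          intro hc
          have h4 : x (k+2) = m' (x (k+1)) := hm'3 _ _ hc
          have h5 : m' (x (k+1)) = x k := by rw [hxso k hk, hmm']
          have h6 : s(x (k+1), x (k+2)) = s(x k, x (k+1)) := by
            rw [h4, h5, Sym2.eq_swap]
          exact hk (ih.1.mp (h6 ▸ hMmem))
        exact ⟨iff_of_true hMmem hk1, iff_of_false hM'not (not_not_intro hk1)⟩
  have hadj : ∀ i, H.Adj (x i) (x (i+1)) := by
    intro i
    rw [← SimpleGraph.mem_edgeSet]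
    by_cases hi : Even i
    · exact hM.1 ((inv i).1.mpr hi)
    · exact hM'.1 ((inv i).2.mpr hi)
  have hnexx : ∀ i, x i ≠ x (i+1) := fun i => (hadj i).ne
  have hback_m : ∀ k, Even k → m (x (k+1)) = x k := fun k hk => by rw [hxse k hk, hmm]
  have hback_m' : ∀ k, ¬ Even k → m' (x (k+1)) = x k := fun k hk => by rw [hxso k hk, hmm']
  have hback : ∀ i j, i ≤ j → x i = x j → i % 2 = j % 2 → x (j - i) = v0 ∧ (j - i) % 2 = 0 := by
    intro i
    induction i with
    | zero =>
      intro j _ h1 h2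
      exact ⟨by rw [Nat.sub_zero, ← h1, hx0], by omega⟩
    | succ i ih =>
      intro j hij h1 h2
      obtain ⟨j', rfl⟩ : ∃ j', j = j' + 1 := ⟨j - 1, by omega⟩
      have hpar : i % 2 = j' % 2 := by omega
      have heq : x i = x j' := by
        by_cases hi : Even i
        · have hj : Even j' := by rw [Nat.even_iff] at hi ⊢; omega
          apply hminj
          rw [← hxse i hi, ← hxse j' hj, h1]
        · have hj : ¬ Even j' := by rw [Nat.even_iff] at hi ⊢; omega
          apply hm'inj
          rw [← hxso i hi, ← hxso j' hj, h1]
      have := ih j' (by omega) heq hpar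
      simpa [Nat.succ_sub_succ] using this
  have hrep : ∃ k, 1 ≤ k ∧ x k = v0 ∧ k % 2 = 0 := by
    obtain ⟨a, b, hab, hfab⟩ :=
      Finite.exists_ne_map_eq_of_infinite (fun k : ℕ => (x k, decide (k % 2 = 0)))
    have h1 : x a = x b := congrArg Prod.fst hfab
    have h2' : decide (a % 2 = 0) = decide (b % 2 = 0) := congrArg Prod.snd hfab
    have h2 : a % 2 = b % 2 := by
      have := decide_eq_decide.mp h2'
      omega
    rcases Nat.lt_or_ge a b with h | h
    · obtain ⟨hv, hp⟩ := hback a b h.le h1 h2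
      exact ⟨b - a, by omega, hv, hp⟩
    · have h' : b < a := by omega
      obtain ⟨hv, hp⟩ := hback b a h'.le h1.symm h2.symm
      exact ⟨a - b, by omega, hv, hp⟩
  set A : Set ℕ := {k | 1 ≤ k ∧ x k = v0 ∧ k % 2 = 0} with hAdef
  set n : ℕ := sInf A with hndef
  obtain ⟨hn1, hxn, hn2⟩ : n ∈ A := Nat.sInf_mem hrep
  have hnmin : ∀ k, k ∈ A → n ≤ k := fun k hk => Nat.sInf_le hk
  have hdist : ∀ i j, i < n → j < n → i % 2 = j % 2 → x i = x j → i = j := by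
    intro i j hi hj hp he
    by_contra hne2
    rcases Nat.lt_or_ge i j with h | h
    · obtain ⟨hv, hp2⟩ := hback i j h.le he hp
      have hmem : j - i ∈ A := ⟨by omega, hv, hp2⟩
      exact absurd (hnmin _ hmem) (by omega)
    · have h' : j < i := by omega
      obtain ⟨hv, hp2⟩ := hback j i h'.le he.symm hp.symm
      have hmem : i - j ∈ A := ⟨by omega, hv, hp2⟩
      exact absurd (hnmin _ hmem) (by omega)
  have hclash : ∀ d a b, a < n → b < n → a % 2 = 0 → b % 2 = 1 → x a = x b →
      b - a + (a - b) = d → False := by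
    intro d
    induction d using Nat.strong_induction_on with
    | _ d ih =>
      intro a b ha hb hpa hpb he hd
      by_cases h1 : b = a + 1
      · exact hnexx a (h1 ▸ he)
      by_cases h2 : a = b + 1
      · exact hnexx b (h2 ▸ he).symm
      rcases Nat.lt_or_ge a b with h | h
      · have hb3 : a + 3 ≤ b := by omega
        have hae : Even a := Nat.even_iff.mpr hpa
        obtain ⟨t, rfl⟩ : ∃ t, b = t + 1 := ⟨b - 1, by omega⟩
        have hte : Even t := by rw [Nat.even_iff]; omega
        have hnew : x t = x (a+1) := by
          rw [← hback_m t hte, ← he, ← hxse a hae]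
        exact ih (t - (a+1) + ((a+1) - t)) (by omega) t (a+1) (by omega) (by omega)
          (by omega) (by omega) hnew (by omega)
      · have ha3 : b + 3 ≤ a := by omega
        have hbo : ¬ Even b := by rw [Nat.even_iff]; omega
        obtain ⟨t, rfl⟩ : ∃ t, a = t + 1 := ⟨a - 1, by omega⟩
        have hto : ¬ Even t := by rw [Nat.even_iff]; omega
        have hnew : x (b+1) = x t := by
          rw [hxso b hbo, ← he, hback_m' t hto]
        exact ih ((b+1) - t + (t - (b+1))) (by omega) (b+1) t (by omega) (by omega)
          (by omega) (by omega) hnew (by omega)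
  have hdistinct : ∀ i j, i < n → j < n → x i = x j → i = j := by
    intro i j hi hj he
    by_cases hp : i % 2 = j % 2
    · exact hdist i j hi hj hp he
    · exfalso
      rcases Nat.mod_two_eq_zero_or_one i with h0 | h0
      · exact hclash _ i j hi hj h0 (by omega) he rfl
      · exact hclash _ j i hj hi (by omega) h0 he.symm rfl
  have hn4 : 4 ≤ n := by
    by_contra hcon
    have hn2' : n = 2 := by omega
    have h1 : s(x 1, x 2) ∈ M' := (inv 1).2.mpr (by simp)
    have h2 : x 2 = x 0 := by rw [← hn2', hxn, hx0]
    have h3 : s(x 1, x 2) = s(x 0, x 1) := by rw [h2, Sym2.eq_swap]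
    have h4 : s(x 0, x 1) ∉ M' := fun hc => by simpa using (inv 0).2.mp hc
    exact h4 (h3 ▸ h1)
  have hxn0 : x n = x 0 := by rw [hxn, hx0]
  let c : H.Walk (x 0) (x 0) := (mkWalk x hadj n).copy rfl hxn0
  have hce : c.edges = (List.range n).map (fun i => s(x i, x (i+1))) := by
    show ((mkWalk x hadj n).copy rfl hxn0).edges = _
    rw [Walk.edges_copy]
    exact mkWalk_edges x hadj n
  have hcs : c.support = (List.range (n+1)).map x := by
    show ((mkWalk x hadj n).copy rfl hxn0).support = _
    rw [Walk.support_copy]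
    exact mkWalk_support x hadj n
  have hclen : c.edges.length = n := by rw [hce]; simp
  have hEinj : ∀ i ∈ List.range n, ∀ j ∈ List.range n,
      s(x i, x (i+1)) = s(x j, x (j+1)) → i = j := by
    intro i hi j hj he
    rw [List.mem_range] at hi hj
    rw [Sym2.eq_iff] at he
    rcases he with ⟨h1, h2⟩ | ⟨h1, h2⟩
    · exact hdistinct i j hi hj h1
    · exfalso
      by_cases hj1 : j + 1 < n
      · have hij : i = j + 1 := hdistinct _ _ hi hj1 h1
        by_cases hi1 : i + 1 < n
        · have := hdistinct _ _ hi1 hj h2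
          omega
        · have hi1' : i + 1 = n := by omega
          have hxj : x 0 = x j := by rw [← hxn0, ← hi1']; exact h2
          have := hdistinct 0 j (by omega) hj hxj
          omega
      · have hj1' : j + 1 = n := by omega
        have h0 : x i = x 0 := by rw [h1, hj1', hxn0]
        have hi0 : i = 0 := hdistinct i 0 hi (by omega) h0
        have hx1 : x 1 = x j := by rw [hi0] at h2; exact h2
        have := hdistinct 1 j (by omega) hj hx1
        omega
  have htrail : c.IsTrail := by
    rw [SimpleGraph.Walk.isTrail_def, hce]
    exact List.Nodup.map_on hEinj List.nodup_range
  have hnnil : c ≠ SimpleGraph.Walk.nil := by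
    intro h
    rw [h] at hclen
    simp at hclen
    omega
  have hsupp : c.support.tail.Nodup := by
    have htl : c.support.tail = (List.range n).map (x ∘ Nat.succ) := by
      rw [hcs, List.range_succ_eq_map, List.map_cons, List.tail_cons, List.map_map]
    rw [htl]
    apply List.Nodup.map_on _ List.nodup_range
    intro i hi j hj he
    rw [List.mem_range] at hi hj
    simp only [Function.comp, Nat.succ_eq_add_one] at he
    by_cases hi1 : i + 1 < n
    · by_cases hj1 : j + 1 < n
      · have := hdistinct _ _ hi1 hj1 he
        omega
      · exfalso
        have hj1' : j + 1 = n := by omega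
        have h0 : x (i+1) = x 0 := by rw [he, hj1', hxn0]
        have := hdistinct _ 0 hi1 (by omega) h0
        omega
    · by_cases hj1 : j + 1 < n
      · exfalso
        have hi1' : i + 1 = n := by omega
        have h0 : x 0 = x (j+1) := by rw [← hxn0, ← hi1']; exact he
        have := hdistinct 0 _ (by omega) hj1 h0
        omega
      · omega
  have hcycC : c.IsCycle := (SimpleGraph.Walk.isCycle_def c).mpr ⟨htrail, hnnil, hsupp⟩
  refine ⟨x 0, c, hcycC, ?_, Or.inl ?_⟩
  · rw [hclen]
    exact Nat.even_iff.mpr hn2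
  · intro i h
    have hget : c.edges.get ⟨i, h⟩ = s(x i, x (i+1)) := by
      rw [List.get_eq_getElem]
      simp only [hce, List.getElem_map, List.getElem_range]
    rw [hget]
    exact (inv i).1

/-- `S` is an anti-forcing set of the perfect matching `M` of `G`:
`S` consists of edges of `G` not in `M` and `M` is the unique perfect matching
of `G - S`. -/
def IsAntiForcingSet (G : SimpleGraph V) (M S : Set (Sym2 V)) : Prop :=
  S ⊆ G.edgeSet \ M ∧ IsUniquePM (G.deleteEdges S) M

/-- The anti-forcing number of a perfect matching `M` of `G`. -/
noncomputable def af (G : SimpleGraph V) (M : Set (Sym2 V)) : ℕ :=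
  sInf {n | ∃ S : Finset (Sym2 V), S.card = n ∧ IsAntiForcingSet G M ↑S}

/-- If `T` is a spanning tree of `G` containing the perfect
matching `M` and some edge `e ∈ E(G) \ E(T)` is such that the unique cycle of
`T + e` is not `M`-alternating, then `af(G, M) ≤ |E(G)| - |V(G)|`, i.e. is
strictly less than the cyclomatic number. -/
theorem statement7 (G T : SimpleGraph V) (hG : G.Connected)
    (M : Set (Sym2 V)) (hM : IsPM G M)
    (hTG : T ≤ G) (hT : T.IsTree) (hMT : M ⊆ T.edgeSet)
    (e : Sym2 V) (he : e ∈ G.edgeSet) (heT : e ∉ T.edgeSet)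
    (hcyc : ∀ (v : V) (c : (T ⊔ SimpleGraph.fromEdgeSet {e}).Walk v v),
      c.IsCycle → ¬ IsAltCycle M c) :
    (af G M : ℤ) ≤ (G.edgeSet.ncard : ℤ) - Fintype.card V := by
  classical
  set H := T ⊔ SimpleGraph.fromEdgeSet {e} with hH
  have hediag : ¬ e.IsDiag := G.not_isDiag_of_mem_edgeSet he
  have hTsub : T.edgeSet ⊆ G.edgeSet := SimpleGraph.edgeSet_mono hTG
  set A : Set (Sym2 V) := insert e T.edgeSet with hA
  have hAsub : A ⊆ G.edgeSet := by
    intro a ha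
    rcases ha with rfl | ha
    · exact he
    · exact hTsub ha
  set S : Set (Sym2 V) := G.edgeSet \ A with hS
  have hHedge : H.edgeSet = A := by
    rw [hH, SimpleGraph.edgeSet_sup, SimpleGraph.edgeSet_fromEdgeSet]
    ext a
    constructor
    · rintro (haT | ⟨rfl, -⟩)
      · exact Set.mem_insert_iff.2 (Or.inr haT)
      · exact Set.mem_insert _ _
    · rintro (rfl | haT)
      · exact Or.inr ⟨rfl, hediag⟩
      · exact Or.inl haT
  have hdel : G.deleteEdges S = H := by
    rw [← SimpleGraph.edgeSet_inj, SimpleGraph.edgeSet_deleteEdges, hHedge, hS,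
      Set.diff_diff_cancel_left hAsub]
  have hPMH : IsPM H M := by
    refine ⟨fun a ha => ?_, hM.2⟩
    rw [hHedge]
    exact Set.mem_insert_iff.2 (Or.inr (hMT ha))
  have hUnique : IsUniquePM (G.deleteEdges S) M := by
    rw [hdel]
    refine ⟨hPMH, fun M' hM'2 => ?_⟩
    by_contra hne
    obtain ⟨v, c, hc⟩ := two_pm_alt_cycle hPMH hM'2 hne
    exact hcyc v c hc.1 hc
  have hSfin : S.Finite := Set.toFinite S
  have hmem : S.ncard ∈ {n | ∃ S' : Finset (Sym2 V), S'.card = n ∧ IsAntiForcingSet G M ↑S'} := by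
    refine ⟨hSfin.toFinset, (Set.ncard_eq_toFinset_card S hSfin).symm, ?_⟩
    rw [Set.Finite.coe_toFinset]
    refine ⟨?_, hUnique⟩
    intro a ha
    exact ⟨ha.1, fun hMa => ha.2 (Set.mem_insert_iff.2 (Or.inr (hMT hMa)))⟩
  have haf : af G M ≤ S.ncard := Nat.sInf_le hmem
  have hVpos : 1 ≤ Fintype.card V := Fintype.card_pos_iff.mpr hG.nonempty
  have hTcard : T.edgeSet.ncard = Fintype.card V - 1 := by
    have h1 := hT.card_edgeFinset
    have h2 : T.edgeSet.ncard = T.edgeFinset.card := by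
      rw [Set.ncard_eq_toFinset_card']
      congr 1
    omega
  have hAcard : A.ncard = Fintype.card V := by
    rw [hA, Set.ncard_insert_of_notMem heT (Set.toFinite _), hTcard]
    omega
  have hle : Fintype.card V ≤ G.edgeSet.ncard := by
    rw [← hAcard]
    exact Set.ncard_le_ncard hAsub (Set.toFinite _)
  have hScard : S.ncard = G.edgeSet.ncard - Fintype.card V := by
    rw [hS, Set.ncard_diff hAsub (Set.toFinite _), hAcard]
  have hfin : (af G M : ℤ) ≤ ((G.edgeSet.ncard - Fintype.card V : ℕ) : ℤ) := by
    rw [← hScard]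
    exact_mod_cast haf
  rw [Nat.cast_sub hle] at hfin
  exact hfin
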